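/- For x > 0 and n ≥ 2, let r(x,n) = (Σ_{k=1}^n 1/(1+xk))⁻¹ and define the payoff amount P(k) = (1 − Σ_{i=1}^k r(x,n)/(1+ix))·(1+kx). Then P(1) < 1 if and only if x < a_n, and P(1) > 1 if and only if x > a_n, where a_n is the unique positive root of 1 = x·Σ_{k=1}^n 1/(1+kx). -/

import Mathlib

theorem first_payoff_vs_one (x : ℝ) (hx : 0 < x) (n : ℕ) (hn : 2 ≤ n) (a : ℝ)
    (ha : 0 < a) (hacrit : a * ∑ k ∈ Finset.Icc 1 n, 1 / (1 + k * a) = 1) :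
    ((1 - (∑ k ∈ Finset.Icc 1 n, 1 / (1 + x * k))⁻¹ / (1 + x)) * (1 + x) < 1 ↔ x < a) ∧
    (1 < (1 - (∑ k ∈ Finset.Icc 1 n, 1 / (1 + x * k))⁻¹ / (1 + x)) * (1 + x) ↔ a < x) := by
  have hne : Finset.Nonempty (Finset.Icc 1 n) :=
    ⟨1, Finset.mem_Icc.mpr ⟨le_refl 1, le_trans (by norm_num) hn⟩⟩
  have hpos : ∀ t : ℝ, 0 < t → ∀ k ∈ Finset.Icc 1 n, (0:ℝ) < 1 + t * k := by
    intro t ht k hk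
    have : (0:ℝ) ≤ t * k := by positivity
    linarith
  set S : ℝ → ℝ := fun t => ∑ k ∈ Finset.Icc 1 n, 1 / (1 + t * k) with hS
  have hSpos : ∀ t : ℝ, 0 < t → 0 < S t := by
    intro t ht
    exact Finset.sum_pos (fun k hk => div_pos one_pos (hpos t ht k hk)) hne
  -- f(t) = t * S t is strictly increasing on positives
  have hmono : ∀ u v : ℝ, 0 < u → u < v → u * S u < v * S v := by
    intro u v hu huv
    have hv : 0 < v := hu.trans huv
    simp only [hS, Finset.mul_sum]
    apply Finset.sum_lt_sum_of_nonempty hne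
    intro k hk
    have hku : (0:ℝ) < 1 + u * k := hpos u hu k hk
    have hkv : (0:ℝ) < 1 + v * k := hpos v hv k hk
    have hk1 : (1:ℕ) ≤ k := (Finset.mem_Icc.mp hk).1
    have hk1' : (1:ℝ) ≤ (k:ℝ) := by exact_mod_cast hk1
    rw [mul_one_div, mul_one_div, div_lt_div_iff₀ hku hkv]
    nlinarith
  have hfa : a * S a = 1 := by
    have hsa : S a = ∑ k ∈ Finset.Icc 1 n, 1 / (1 + (k:ℝ) * a) := by
      simp only [hS]
      exact Finset.sum_congr rfl (fun k _ => by rw [mul_comm])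
    rw [hsa]; exact hacrit
  have hSx : 0 < S x := hSpos x hx
  have hx1 : (0:ℝ) < 1 + x := by linarith
  have hP : (1 - (S x)⁻¹ / (1 + x)) * (1 + x) = 1 + x - (S x)⁻¹ := by
    field_simp
  have hinv : x * S x < 1 ↔ x < (S x)⁻¹ := by
    rw [← one_div, lt_div_iff₀ hSx]
  have hinv2 : 1 < x * S x ↔ (S x)⁻¹ < x := by
    rw [← one_div, div_lt_iff₀ hSx]
  have hlt : x * S x < 1 ↔ x < a := by
    constructor
    · intro h
      by_contra hcon
      push_neg at hcon
      rcases eq_or_lt_of_le hcon with heq | hlt'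
      · rw [heq] at hfa; linarith
      · have := hmono a x ha hlt'; linarith
    · intro h
      have := hmono x a hx h; linarith
  have hgt : 1 < x * S x ↔ a < x := by
    constructor
    · intro h
      by_contra hcon
      push_neg at hcon
      rcases eq_or_lt_of_le hcon with heq | hlt'
      · rw [← heq] at hfa; linarith
      · have := hmono x a hx hlt'; linarith
    · intro h
      have := hmono a x ha h; linarith
  constructor
  · rw [hP]
    rw [show (1 + x - (S x)⁻¹ < 1) ↔ (x < (S x)⁻¹) from by constructor <;> intro h <;> linarith]
    rw [← hinv]; exact hlt
  · rw [hP]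
    rw [show (1 < 1 + x - (S x)⁻¹) ↔ ((S x)⁻¹ < x) from by constructor <;> intro h <;> linarith]
    rw [← hinv2]; exact hgt
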